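/- arXiv:1111.2324 — 5 statements merged into one kernel-verified Lean document; each statement's English description precedes it below -/
import Mathlib

section
/- A quiver J is injective with respect to the class of all monomorphisms in the category of quivers if and only if J is loaded and has at least one vertex. -/
open CategoryTheory

/-- A quiver (directed multigraph): vertices, edges, source and target maps. -/
structure Quiv' where
  V : Type
  E : Type
  s : E → V
  t : E → V

/-- A quiver homomorphism: a vertex map and an edge map commuting with source/target. -/
@[ext]
structure QuivHom (G H : Quiv') where
  vMap : G.V → H.V
  eMap : G.E → H.E
  comm_s : ∀ e, vMap (G.s e) = H.s (eMap e)
  comm_t : ∀ e, vMap (G.t e) = H.t (eMap e)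

def QuivHom.id' (G : Quiv') : QuivHom G G where
  vMap := id
  eMap := id
  comm_s _ := rfl
  comm_t _ := rfl

def QuivHom.comp' {G H K : Quiv'} (f : QuivHom G H) (g : QuivHom H K) : QuivHom G K where
  vMap := g.vMap ∘ f.vMap
  eMap := g.eMap ∘ f.eMap
  comm_s e := by simp only [Function.comp_apply, f.comm_s, g.comm_s]
  comm_t e := by simp only [Function.comp_apply, f.comm_t, g.comm_t]

instance : Category Quiv' where
  Hom := QuivHom
  id := QuivHom.id'
  comp := QuivHom.comp'
  id_comp f := rfl
  comp_id f := rfl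
  assoc f g h := rfl

/-- `I(S)`: the empty quiver (independent set of vertices) on `S`. -/
def IQ (S : Type) : Quiv' := ⟨S, Empty, Empty.elim, Empty.elim⟩

/-- `M(S)`: the independent set of edges on `S`. -/
def MQ (S : Type) : Quiv' := ⟨Fin 2 × S, S, fun x => (0, x), fun x => (1, x)⟩

/-- `K(S)`: the complete (full) quiver on `S`. -/
def KQ (S : Type) : Quiv' := ⟨S, S × S, Prod.fst, Prod.snd⟩

/-- `B(S)`: the bouquet on `S`. -/
def BQ (S : Type) : Quiv' := ⟨PUnit, S, fun _ => PUnit.unit, fun _ => PUnit.unit⟩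

/-- The vertex functor `V : Quiv → Set`. -/
def Vf : Quiv' ⥤ Type where
  obj G := G.V
  map φ := TypeCat.ofHom φ.vMap
  map_id _ := rfl
  map_comp _ _ := rfl

/-- The edge functor `E : Quiv → Set`. -/
def Ef : Quiv' ⥤ Type where
  obj G := G.E
  map φ := TypeCat.ofHom φ.eMap
  map_id _ := rfl
  map_comp _ _ := rfl

/-- The empty-quiver functor `I : Set → Quiv`. -/
def If : Type ⥤ Quiv' where
  obj := IQ
  map f := ⟨f, id, fun e => e.elim, fun e => e.elim⟩
  map_id _ := rfl
  map_comp _ _ := rfl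

/-- The independent-edges functor `M : Set → Quiv`. -/
def Mf : Type ⥤ Quiv' where
  obj := MQ
  map f := ⟨Prod.map id f, f, fun _ => rfl, fun _ => rfl⟩
  map_id _ := rfl
  map_comp _ _ := rfl

/-- The complete-quiver functor `K : Set → Quiv`. -/
def Kf : Type ⥤ Quiv' where
  obj := KQ
  map f := ⟨f, Prod.map f f, fun _ => rfl, fun _ => rfl⟩
  map_id _ := rfl
  map_comp _ _ := rfl

/-- The bouquet functor `B : Set → Quiv`. -/
def Bf : Type ⥤ Quiv' where
  obj := BQ
  map f := ⟨id, f, fun _ => rfl, fun _ => rfl⟩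
  map_id _ := rfl
  map_comp _ _ := rfl

/-- The set of edges of `G` with source `v` and target `w`. -/
def edgesBetween (G : Quiv') (v w : G.V) : Set G.E := {e | G.s e = v ∧ G.t e = w}

/-- A quiver is loaded if between any two vertices there is an edge. -/
def Loaded (J : Quiv') : Prop := ∀ v w : J.V, ∃ e : J.E, J.s e = v ∧ J.t e = w

/-- `J` is injective with respect to the morphism `φ`. -/
def InjectiveWrt (J : Quiv') {A B : Quiv'} (φ : A ⟶ B) : Prop :=
  ∀ ψ : A ⟶ J, ∃ ψ' : B ⟶ J, φ ≫ ψ' = ψ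

/-- `J` is injective with respect to all monomorphisms. -/
def MonoInjective (J : Quiv') : Prop :=
  ∀ ⦃A B : Quiv'⦄ (φ : A ⟶ B), Mono φ → ∀ ψ : A ⟶ J, ∃ ψ' : B ⟶ J, φ ≫ ψ' = ψ

/-- A monomorphism `φ` is mono-essential if composing with it reflects monicity. -/
def MonoEssential {D C : Quiv'} (φ : D ⟶ C) : Prop :=
  Mono φ ∧ ∀ ⦃A : Quiv'⦄ (α : C ⟶ A), Mono (φ ≫ α) → Mono α

/-- `P` is projective with respect to all epimorphisms. -/
def EpiProjective (P : Quiv') : Prop :=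
  ∀ ⦃A B : Quiv'⦄ (φ : A ⟶ B), Epi φ → ∀ ψ : P ⟶ B, ∃ γ : P ⟶ A, γ ≫ φ = ψ

/-- An epimorphism `φ` is epi-coessential if composing with it reflects epicity. -/
def EpiCoessential {G H : Quiv'} (φ : G ⟶ H) : Prop :=
  Epi φ ∧ ∀ ⦃A : Quiv'⦄ (α : A ⟶ G), Epi (α ≫ φ) → Epi α

/-- Disjoint union of two quivers. -/
def DU (G H : Quiv') : Quiv' :=
  ⟨G.V ⊕ H.V, G.E ⊕ H.E, Sum.map G.s H.s, Sum.map G.t H.t⟩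

/-- The loading of a quiver: add one edge between each pair of vertices having none. -/
def Loading (D : Quiv') : Quiv' where
  V := D.V
  E := D.E ⊕ {p : D.V × D.V // edgesBetween D p.1 p.2 = ∅}
  s := Sum.elim D.s (fun p => p.val.1)
  t := Sum.elim D.t (fun p => p.val.2)

/-- The canonical inclusion of a quiver into its loading. -/
def loadInc (D : Quiv') : D ⟶ Loading D where
  vMap := id
  eMap := Sum.inl
  comm_s _ := rfl
  comm_t _ := rfl

/-- A vertex is independent if it is incident to no edge. -/
def Indep (G : Quiv') (v : G.V) : Prop := (∀ e, G.s e ≠ v) ∧ (∀ e, G.t e ≠ v)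

/-- The explosion of a quiver `G`: `I(indep G) ⊔ M(E(G))`. -/
def Explosion (G : Quiv') : Quiv' := DU (IQ {v : G.V // Indep G v}) (MQ G.E)

/-- The covering map from the explosion of `G` onto `G`. -/
def coverMap (G : Quiv') : Explosion G ⟶ G where
  vMap := Sum.elim Subtype.val (fun p => if p.1 = 0 then G.s p.2 else G.t p.2)
  eMap := Sum.elim Empty.elim id
  comm_s e := by
    cases e with
    | inl e => exact e.elim
    | inr e => rfl
  comm_t e := by
    cases e with
    | inl e => exact e.elim
    | inr e => rfl

theorem mono_injective_iff (J : Quiv') :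
    MonoInjective J ↔ Loaded J ∧ Nonempty J.V := by
  classical
  constructor
  · intro hMI
    constructor
    · -- Loaded
      intro v w
      let φ : IQ Bool ⟶ MQ PUnit :=
        ⟨fun b => (cond b 1 0, PUnit.unit), Empty.elim, fun e => e.elim, fun e => e.elim⟩
      have hm : Mono φ := by
        constructor
        intro X g1 g2 h
        apply QuivHom.ext
        · funext x
          have h1 := congrArg (fun k : X ⟶ MQ PUnit => k.vMap x) h
          have h2 : cond (g1.vMap x) (1 : Fin 2) 0 = cond (g2.vMap x) (1 : Fin 2) 0 :=
            congrArg Prod.fst h1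
          revert h2
          cases (g1.vMap x : Bool) <;> cases (g2.vMap x : Bool) <;> intro h2 <;>
            first | rfl | exact absurd h2 (by decide)
        · funext x; exact (g1.eMap x).elim
      let ψ : IQ Bool ⟶ J :=
        ⟨fun b => cond b w v, Empty.elim, fun e => e.elim, fun e => e.elim⟩
      obtain ⟨ψ', hψ⟩ := hMI φ hm ψ
      refine ⟨ψ'.eMap PUnit.unit, ?_, ?_⟩
      · have h0 := congrArg (fun k : IQ Bool ⟶ J => k.vMap false) hψ
        have hs := ψ'.comm_s PUnit.unit
        rw [← hs]
        exact h0
      · have h1 := congrArg (fun k : IQ Bool ⟶ J => k.vMap true) hψ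
        have ht := ψ'.comm_t PUnit.unit
        rw [← ht]
        exact h1
    · -- Nonempty
      let φ : IQ Empty ⟶ IQ PUnit :=
        ⟨Empty.elim, id, fun e => e.elim, fun e => e.elim⟩
      have hm : Mono φ := by
        constructor
        intro X g1 g2 _
        apply QuivHom.ext
        · funext x; exact (g1.vMap x).elim
        · funext x; exact (g1.eMap x).elim
      let ψ : IQ Empty ⟶ J :=
        ⟨Empty.elim, Empty.elim, fun e => e.elim, fun e => e.elim⟩
      obtain ⟨ψ', _⟩ := hMI φ hm ψ
      exact ⟨ψ'.vMap PUnit.unit⟩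
  · rintro ⟨hload, ⟨j0⟩⟩ A B φ hmono ψ
    -- injectivity of vertex map
    have hv : Function.Injective φ.vMap := by
      intro a1 a2 h
      let g : A.V → (IQ PUnit ⟶ A) := fun a =>
        ⟨fun _ => a, Empty.elim, fun e => e.elim, fun e => e.elim⟩
      have hg : g a1 ≫ φ = g a2 ≫ φ := by
        apply QuivHom.ext
        · funext _; exact h
        · funext e; exact e.elim
      have := hmono.right_cancellation (g a1) (g a2) hg
      exact congrArg (fun k : IQ PUnit ⟶ A => k.vMap PUnit.unit) this
    -- injectivity of edge map
    have he : Function.Injective φ.eMap := by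
      intro e1 e2 h
      let g : A.E → (MQ PUnit ⟶ A) := fun e =>
        ⟨fun p => if p.1 = 0 then A.s e else A.t e, fun _ => e,
          fun x => by simp [MQ], fun x => by simp [MQ]⟩
      have hg : g e1 ≫ φ = g e2 ≫ φ := by
        apply QuivHom.ext
        · funext p
          show φ.vMap _ = φ.vMap _
          by_cases hp : p.1 = 0 <;>
            simp only [g, hp, if_true, if_false, φ.comm_s, φ.comm_t, h]
        · funext _
          exact h
      have := hmono.right_cancellation (g e1) (g e2) hg
      exact congrArg (fun k : MQ PUnit ⟶ A => k.eMap PUnit.unit) this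
    -- construct the extension
    let vmap : B.V → J.V := fun b =>
      if h : ∃ a, φ.vMap a = b then ψ.vMap h.choose else j0
    have hvm : ∀ a, vmap (φ.vMap a) = ψ.vMap a := by
      intro a
      have h : ∃ a', φ.vMap a' = φ.vMap a := ⟨a, rfl⟩
      simp only [vmap, dif_pos h]
      exact congrArg ψ.vMap (hv h.choose_spec)
    let emap : B.E → J.E := fun f =>
      if h : ∃ e, φ.eMap e = f then ψ.eMap h.choose
      else (hload (vmap (B.s f)) (vmap (B.t f))).choose
    have hcs : ∀ f, vmap (B.s f) = J.s (emap f) := by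
      intro f
      by_cases h : ∃ e, φ.eMap e = f
      · simp only [emap, dif_pos h]
        have hsf : B.s f = φ.vMap (A.s h.choose) := by
          rw [φ.comm_s, h.choose_spec]
        rw [hsf, hvm, ψ.comm_s]
      · simp only [emap, dif_neg h]
        exact ((hload (vmap (B.s f)) (vmap (B.t f))).choose_spec.1).symm
    have hct : ∀ f, vmap (B.t f) = J.t (emap f) := by
      intro f
      by_cases h : ∃ e, φ.eMap e = f
      · simp only [emap, dif_pos h]
        have htf : B.t f = φ.vMap (A.t h.choose) := by
          rw [φ.comm_t, h.choose_spec]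
        rw [htf, hvm, ψ.comm_t]
      · simp only [emap, dif_neg h]
        exact ((hload (vmap (B.s f)) (vmap (B.t f))).choose_spec.2).symm
    refine ⟨⟨vmap, emap, hcs, hct⟩, ?_⟩
    apply QuivHom.ext
    · funext a
      exact hvm a
    · funext e
      have h : ∃ e', φ.eMap e' = φ.eMap e := ⟨e, rfl⟩
      show emap (φ.eMap e) = ψ.eMap e
      simp only [emap, dif_pos h]
      exact congrArg ψ.eMap (he h.choose_spec)
end

section
/- A quiver map φ from the empty quiver I(∅) to a quiver C is mono-essential if and only if C has at most one vertex and at most one edge. -/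
open CategoryTheory

/-- Any map into the empty quiver is unique, so any map out of `IQ Empty` is mono. -/
lemma mono_from_IQ_empty {C : Quiv'} (φ : IQ Empty ⟶ C) : Mono φ := by
  constructor
  intro Z g h _
  apply QuivHom.ext
  · funext v; exact (g.vMap v).elim
  · funext e; exact (g.eMap e).elim

lemma mono_of_subsingleton {C : Quiv'} (hV : Subsingleton C.V) (hE : Subsingleton C.E)
    {A : Quiv'} (α : C ⟶ A) : Mono α := by
  constructor
  intro Z g h _
  apply QuivHom.ext
  · funext v; exact hV.elim _ _
  · funext e; exact hE.elim _ _

theorem mono_essential_from_empty_iff (C : Quiv') (φ : IQ Empty ⟶ C) :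
    MonoEssential φ ↔ Subsingleton C.V ∧ Subsingleton C.E := by
  constructor
  · rintro ⟨-, hess⟩
    -- the map to the terminal quiver is mono
    let T : Quiv' := BQ PUnit
    let bang : C ⟶ T := ⟨fun _ => PUnit.unit, fun _ => PUnit.unit, fun _ => rfl, fun _ => rfl⟩
    have hbang : Mono bang := by
      apply hess
      exact mono_from_IQ_empty _
    constructor
    · constructor
      intro v w
      let f : IQ PUnit ⟶ C := ⟨fun _ => v, Empty.elim, fun e => e.elim, fun e => e.elim⟩
      let g : IQ PUnit ⟶ C := ⟨fun _ => w, Empty.elim, fun e => e.elim, fun e => e.elim⟩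
      have h : f ≫ bang = g ≫ bang := by
        apply QuivHom.ext
        · rfl
        · funext e; exact e.elim
      have := (cancel_mono bang).mp h
      exact congrFun (congrArg QuivHom.vMap this) PUnit.unit
    · constructor
      intro e e'
      let f : MQ PUnit ⟶ C :=
        ⟨fun p => if p.1 = 0 then C.s e else C.t e, fun _ => e,
         fun _ => rfl, fun _ => rfl⟩
      let g : MQ PUnit ⟶ C :=
        ⟨fun p => if p.1 = 0 then C.s e' else C.t e', fun _ => e',
         fun _ => rfl, fun _ => rfl⟩
      have h : f ≫ bang = g ≫ bang := by
        apply QuivHom.ext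
        · rfl
        · rfl
      have := (cancel_mono bang).mp h
      exact congrFun (congrArg QuivHom.eMap this) PUnit.unit
  · rintro ⟨hV, hE⟩
    refine ⟨mono_from_IQ_empty φ, fun A α _ => mono_of_subsingleton hV hE α⟩
end

section
/- Let φ : D → C be a monic quiver map with V(D) nonempty. Then φ is mono-essential if and only if: (1) the vertex map V(φ) is bijective; (2) whenever edges_D(v,w) ≠ ∅, the image under E(φ) of edges_D(v,w) equals edges_C(V(φ)(v), V(φ)(w)); and (3) whenever edges_D(v,w) = ∅, the set edges_C(V(φ)(v), V(φ)(w)) has at most one element. -/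
open CategoryTheory

lemma comp_vMap {G H K : Quiv'} (f : G ⟶ H) (g : H ⟶ K) :
    (f ≫ g).vMap = g.vMap ∘ f.vMap := rfl

lemma comp_eMap {G H K : Quiv'} (f : G ⟶ H) (g : H ⟶ K) :
    (f ≫ g).eMap = g.eMap ∘ f.eMap := rfl

lemma mono_iff_inj {G H : Quiv'} (f : G ⟶ H) :
    Mono f ↔ Function.Injective f.vMap ∧ Function.Injective f.eMap := by
  constructor
  · intro hf
    constructor
    · intro v1 v2 h
      let g1 : IQ PUnit ⟶ G := ⟨fun _ => v1, Empty.elim, fun e => e.elim, fun e => e.elim⟩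
      let g2 : IQ PUnit ⟶ G := ⟨fun _ => v2, Empty.elim, fun e => e.elim, fun e => e.elim⟩
      have : g1 ≫ f = g2 ≫ f := by
        apply QuivHom.ext
        · funext x; exact h
        · funext e; exact e.elim
      have := (cancel_mono f).mp this
      exact congrFun (congrArg QuivHom.vMap this) PUnit.unit
    · intro e1 e2 h
      have hs : f.vMap (G.s e1) = f.vMap (G.s e2) := by
        rw [f.comm_s, f.comm_s, h]
      have ht : f.vMap (G.t e1) = f.vMap (G.t e2) := by
        rw [f.comm_t, f.comm_t, h]
      let g1 : MQ PUnit ⟶ G :=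
        ⟨fun p => if p.1 = 0 then G.s e1 else G.t e1, fun _ => e1,
          fun _ => by simp [MQ], fun _ => by simp [MQ]⟩
      let g2 : MQ PUnit ⟶ G :=
        ⟨fun p => if p.1 = 0 then G.s e2 else G.t e2, fun _ => e2,
          fun _ => by simp [MQ], fun _ => by simp [MQ]⟩
      have : g1 ≫ f = g2 ≫ f := by
        apply QuivHom.ext
        · funext p
          show f.vMap _ = f.vMap _
          by_cases hp : p.1 = 0 <;> simp [g1, g2, hp, hs, ht]
        · funext _; exact h
      have := (cancel_mono f).mp this
      exact congrFun (congrArg QuivHom.eMap this) PUnit.unit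
  · rintro ⟨hv, he⟩
    constructor
    intro Z g1 g2 hgh
    apply QuivHom.ext
    · funext x
      exact hv (congrFun (congrArg QuivHom.vMap hgh) x)
    · funext x
      exact he (congrFun (congrArg QuivHom.eMap hgh) x)

theorem mono_essential_iff (D C : Quiv') (φ : D ⟶ C) (hφ : CategoryTheory.Mono φ)
    (hD : Nonempty D.V) :
    MonoEssential φ ↔
      Function.Bijective φ.vMap ∧
      (∀ v w : D.V, (edgesBetween D v w).Nonempty →
        φ.eMap '' edgesBetween D v w = edgesBetween C (φ.vMap v) (φ.vMap w)) ∧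
      (∀ v w : D.V, edgesBetween D v w = ∅ →
        (edgesBetween C (φ.vMap v) (φ.vMap w)).Subsingleton) := by
  classical
  constructor
  · rintro ⟨_, hess⟩
    obtain ⟨hv, he⟩ := (mono_iff_inj φ).mp hφ
    -- surjectivity of vMap
    have hsurj : Function.Surjective φ.vMap := by
      by_contra hns
      unfold Function.Surjective at hns
      push_neg at hns
      obtain ⟨c, hc⟩ := hns
      obtain ⟨d0⟩ := hD
      set x := φ.vMap d0 with hx
      let g : C.V → C.V := fun c' => if c' = c then x else c'
      let A : Quiv' := ⟨C.V, C.E, g ∘ C.s, g ∘ C.t⟩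
      let α : C ⟶ A := ⟨g, id, fun _ => rfl, fun _ => rfl⟩
      have hmono : Mono (φ ≫ α) := by
        rw [mono_iff_inj]
        constructor
        · intro d1 d2 h12
          apply hv
          have h1 : g (φ.vMap d1) = g (φ.vMap d2) := h12
          have e1 : g (φ.vMap d1) = φ.vMap d1 := if_neg (fun h => hc d1 h)
          have e2 : g (φ.vMap d2) = φ.vMap d2 := if_neg (fun h => hc d2 h)
          rw [e1, e2] at h1; exact h1
        · exact he
      have := ((mono_iff_inj α).mp (hess α hmono)).1
      have hcx : g c = g x := by
        simp only [g, if_pos rfl]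
        by_cases hxc : x = c
        · rw [if_pos hxc, hxc]
        · rw [if_neg hxc]
      have := this hcx
      exact hc d0 this.symm
    refine ⟨⟨hv, hsurj⟩, ?_, ?_⟩
    · -- edges condition, nonempty case
      intro v w ⟨d0, hd0⟩
      apply Set.Subset.antisymm
      · rintro e ⟨d, hd, rfl⟩
        exact ⟨by rw [← φ.comm_s, hd.1], by rw [← φ.comm_t, hd.2]⟩
      · intro e heC
        by_contra hnot
        have hrange : e ∉ Set.range φ.eMap := by
          rintro ⟨d, rfl⟩
          apply hnot
          refine ⟨d, ⟨?_, ?_⟩, rfl⟩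
          · apply hv; rw [φ.comm_s, heC.1]
          · apply hv; rw [φ.comm_t, heC.2]
        set x := φ.eMap d0 with hx
        have hex : e ≠ x := fun h => hrange ⟨d0, h.symm ▸ rfl⟩
        have hsx : C.s x = C.s e := by
          rw [← φ.comm_s, hd0.1, heC.1]
        have htx : C.t x = C.t e := by
          rw [← φ.comm_t, hd0.2, heC.2]
        let g : C.E → C.E := fun e' => if e' = e then x else e'
        have hgs : ∀ e', C.s e' = C.s (g e') := by
          intro e'
          by_cases h : e' = e
          · simp [g, h, hsx]
          · simp [g, h]
        have hgt : ∀ e', C.t e' = C.t (g e') := by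
          intro e'
          by_cases h : e' = e
          · simp [g, h, htx]
          · simp [g, h]
        let α : C ⟶ C := ⟨id, g, hgs, hgt⟩
        have hmono : Mono (φ ≫ α) := by
          rw [mono_iff_inj]
          refine ⟨hv, ?_⟩
          intro d1 d2 h12
          apply he
          have e1 : g (φ.eMap d1) = φ.eMap d1 :=
            if_neg (fun h : φ.eMap d1 = e => hrange ⟨d1, h⟩)
          have e2 : g (φ.eMap d2) = φ.eMap d2 :=
            if_neg (fun h : φ.eMap d2 = e => hrange ⟨d2, h⟩)
          rw [← e1, ← e2]; exact h12
        have := ((mono_iff_inj α).mp (hess α hmono)).2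
        have hgex : g e = g x := by
          simp only [g, if_pos rfl]
          rw [if_neg (fun h : x = e => hex h.symm)]
        exact hex (this hgex)
    · -- subsingleton case
      intro v w hvw e1 he1 e2 he2
      by_contra hne
      have hrange : ∀ e, e ∈ edgesBetween C (φ.vMap v) (φ.vMap w) → e ∉ Set.range φ.eMap := by
        rintro e heC ⟨d, rfl⟩
        have : d ∈ edgesBetween D v w := by
          refine ⟨?_, ?_⟩
          · apply hv; rw [φ.comm_s, heC.1]
          · apply hv; rw [φ.comm_t, heC.2]
        rw [hvw] at this
        exact this
      have hr1 := hrange e1 he1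
      have hs12 : C.s e1 = C.s e2 := by rw [he1.1, he2.1]
      have ht12 : C.t e1 = C.t e2 := by rw [he1.2, he2.2]
      let g : C.E → C.E := fun e' => if e' = e1 then e2 else e'
      have hgs : ∀ e', C.s e' = C.s (g e') := by
        intro e'
        by_cases h : e' = e1
        · simp [g, h, hs12]
        · simp [g, h]
      have hgt : ∀ e', C.t e' = C.t (g e') := by
        intro e'
        by_cases h : e' = e1
        · simp [g, h, ht12]
        · simp [g, h]
      let α : C ⟶ C := ⟨id, g, hgs, hgt⟩
      have hmono : Mono (φ ≫ α) := by
        rw [mono_iff_inj]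
        refine ⟨hv, ?_⟩
        intro d1 d2 h12
        apply he
        have f1 : g (φ.eMap d1) = φ.eMap d1 :=
          if_neg (fun h : φ.eMap d1 = e1 => hr1 ⟨d1, h⟩)
        have f2 : g (φ.eMap d2) = φ.eMap d2 :=
          if_neg (fun h : φ.eMap d2 = e1 => hr1 ⟨d2, h⟩)
        rw [← f1, ← f2]; exact h12
      have := ((mono_iff_inj α).mp (hess α hmono)).2
      have hge : g e1 = g e2 := by
        simp only [g, if_pos rfl]
        rw [if_neg (fun h : e2 = e1 => hne h.symm)]
      exact hne (this hge)
  · rintro ⟨⟨hvinj, hvsurj⟩, hnem, hemp⟩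
    obtain ⟨hv, he⟩ := (mono_iff_inj φ).mp hφ
    refine ⟨hφ, ?_⟩
    intro A α hmono
    obtain ⟨hcv, hce⟩ := (mono_iff_inj (φ ≫ α)).mp hmono
    rw [mono_iff_inj]
    have havinj : Function.Injective α.vMap := by
      intro c1 c2 h12
      obtain ⟨d1, rfl⟩ := hvsurj c1
      obtain ⟨d2, rfl⟩ := hvsurj c2
      exact congrArg φ.vMap (hcv h12)
    refine ⟨havinj, ?_⟩
    intro e1 e2 h12
    have hs12 : C.s e1 = C.s e2 := by
      apply havinj; rw [α.comm_s, α.comm_s, h12]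
    have ht12 : C.t e1 = C.t e2 := by
      apply havinj; rw [α.comm_t, α.comm_t, h12]
    obtain ⟨v, hvv⟩ := hvsurj (C.s e1)
    obtain ⟨w, hww⟩ := hvsurj (C.t e1)
    have he1m : e1 ∈ edgesBetween C (φ.vMap v) (φ.vMap w) := ⟨hvv.symm, hww.symm⟩
    have he2m : e2 ∈ edgesBetween C (φ.vMap v) (φ.vMap w) :=
      ⟨hs12 ▸ hvv.symm, ht12 ▸ hww.symm⟩
    rcases Set.eq_empty_or_nonempty (edgesBetween D v w) with hcase | hcase
    · exact hemp v w hcase he1m he2m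
    · have himg := hnem v w hcase
      rw [← himg] at he1m he2m
      obtain ⟨d1, _, rfl⟩ := he1m
      obtain ⟨d2, _, rfl⟩ := he2m
      exact congrArg φ.eMap (hce h12)
end

section
/- For any quiver D with at least one vertex, the canonical inclusion j_D of D into its loading L(D) (sending each vertex to itself and each edge e to (0,e)) is a mono-essential monomorphism into a loaded quiver; hence L(D) with j_D is a mono-injective envelope of D. -/
open CategoryTheory

lemma mono_of_inj {A B : Quiv'} (φ : A ⟶ B) (hv : Function.Injective φ.vMap)
    (he : Function.Injective φ.eMap) : Mono φ := by
  constructor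
  intro Z f g h
  apply QuivHom.ext
  · funext z
    exact hv (congrFun (congrArg QuivHom.vMap h) z)
  · funext z
    exact he (congrFun (congrArg QuivHom.eMap h) z)

lemma inj_of_mono {A B : Quiv'} (φ : A ⟶ B) (h : Mono φ) :
    Function.Injective φ.vMap ∧ Function.Injective φ.eMap := by
  constructor
  · intro v w hvw
    let f : IQ PUnit ⟶ A := ⟨fun _ => v, Empty.elim, fun e => e.elim, fun e => e.elim⟩
    let g : IQ PUnit ⟶ A := ⟨fun _ => w, Empty.elim, fun e => e.elim, fun e => e.elim⟩
    have hc : f ≫ φ = g ≫ φ := by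
      apply QuivHom.ext
      · funext _; exact hvw
      · funext e; exact e.elim
    have := h.right_cancellation f g hc
    exact congrFun (congrArg QuivHom.vMap this) PUnit.unit
  · intro e1 e2 he
    have hs : φ.vMap (A.s e1) = φ.vMap (A.s e2) := by
      rw [φ.comm_s, φ.comm_s, he]
    have ht : φ.vMap (A.t e1) = φ.vMap (A.t e2) := by
      rw [φ.comm_t, φ.comm_t, he]
    let mk : A.E → (MQ PUnit ⟶ A) := fun e =>
      ⟨fun p => if p.1 = 0 then A.s e else A.t e, fun _ => e,
        fun _ => by simp [MQ], fun _ => by simp [MQ]⟩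
    have hc : mk e1 ≫ φ = mk e2 ≫ φ := by
      apply QuivHom.ext
      · funext p
        show φ.vMap _ = φ.vMap _
        dsimp [mk]
        split
        · exact hs
        · exact ht
      · funext _; exact he
    have := h.right_cancellation (mk e1) (mk e2) hc
    exact congrFun (congrArg QuivHom.eMap this) PUnit.unit

lemma loaded_loading (D : Quiv') : Loaded (Loading D) := by
  intro v w
  by_cases h : edgesBetween D v w = ∅
  · exact ⟨Sum.inr ⟨(v, w), h⟩, rfl, rfl⟩
  · obtain ⟨e, he⟩ := Set.nonempty_iff_ne_empty.mpr h
    exact ⟨Sum.inl e, he.1, he.2⟩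

open Classical in
lemma monoInjective_of_loaded (J : Quiv') (hJ : Loaded J) (hV : Nonempty J.V) :
    MonoInjective J := by
  intro A B φ hm ψ
  obtain ⟨hv, he⟩ := inj_of_mono φ hm
  let v0 : J.V := hV.some
  let vext : B.V → J.V := fun b =>
    if h : ∃ a, φ.vMap a = b then ψ.vMap h.choose else v0
  have hvext : ∀ a : A.V, vext (φ.vMap a) = ψ.vMap a := by
    intro a
    have h : ∃ a', φ.vMap a' = φ.vMap a := ⟨a, rfl⟩
    have : h.choose = a := hv h.choose_spec
    simp only [vext, dif_pos h, this]
  let eext : B.E → J.E := fun e =>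
    if h : ∃ a, φ.eMap a = e then ψ.eMap h.choose
    else (hJ (vext (B.s e)) (vext (B.t e))).choose
  have heext : ∀ a : A.E, eext (φ.eMap a) = ψ.eMap a := by
    intro a
    have h : ∃ a', φ.eMap a' = φ.eMap a := ⟨a, rfl⟩
    have : h.choose = a := he h.choose_spec
    simp only [eext, dif_pos h, this]
  have hcomm_s : ∀ e, vext (B.s e) = J.s (eext e) := by
    intro e
    by_cases h : ∃ a, φ.eMap a = e
    · obtain ⟨a, ha⟩ := h
      subst ha
      rw [heext a, ← φ.comm_s, hvext, ψ.comm_s]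
    · simp only [eext, dif_neg h]
      exact ((hJ (vext (B.s e)) (vext (B.t e))).choose_spec.1).symm
  have hcomm_t : ∀ e, vext (B.t e) = J.t (eext e) := by
    intro e
    by_cases h : ∃ a, φ.eMap a = e
    · obtain ⟨a, ha⟩ := h
      subst ha
      rw [heext a, ← φ.comm_t, hvext, ψ.comm_t]
    · simp only [eext, dif_neg h]
      exact ((hJ (vext (B.s e)) (vext (B.t e))).choose_spec.2).symm
  refine ⟨⟨vext, eext, hcomm_s, hcomm_t⟩, ?_⟩
  apply QuivHom.ext
  · funext a; exact hvext a
  · funext a; exact heext a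

theorem loading_is_injective_envelope (D : Quiv') (hD : Nonempty D.V) :
    CategoryTheory.Mono (loadInc D) ∧ MonoEssential (loadInc D) ∧
      Loaded (Loading D) ∧ MonoInjective (Loading D) := by
  have hvinj : Function.Injective (loadInc D).vMap := fun a b h => h
  have heinj : Function.Injective (loadInc D).eMap := fun a b h => Sum.inl.inj h
  have hmono : Mono (loadInc D) := mono_of_inj _ hvinj heinj
  have hload := loaded_loading D
  refine ⟨hmono, ⟨hmono, ?_⟩, hload, monoInjective_of_loaded _ hload hD⟩
  intro A α hma
  obtain ⟨hv, he⟩ := inj_of_mono _ hma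
  have hav : Function.Injective α.vMap := hv
  have hae : Function.Injective α.eMap := by
    intro e1 e2 h12
    have hs : (Loading D).s e1 = (Loading D).s e2 := by
      apply hav
      rw [α.comm_s, α.comm_s, h12]
    have ht : (Loading D).t e1 = (Loading D).t e2 := by
      apply hav
      rw [α.comm_t, α.comm_t, h12]
    match e1, e2 with
    | Sum.inl a, Sum.inl b =>
      exact congrArg Sum.inl (he h12)
    | Sum.inl a, Sum.inr p =>
      exact absurd (Set.eq_empty_iff_forall_notMem.mp p.2 a ⟨hs, ht⟩) (by simp)
    | Sum.inr p, Sum.inl a =>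
      exact absurd (Set.eq_empty_iff_forall_notMem.mp p.2 a ⟨hs.symm, ht.symm⟩) (by simp)
    | Sum.inr p, Sum.inr q =>
      congr 1
      exact Subtype.ext (Prod.ext hs ht)
  exact mono_of_inj _ hav hae
end

section
/- For any quiver G, the covering map p_G from the explosion X(G) = I(indep(G)) ⊔ M(E(G)) onto G is an epi-coessential epimorphism from an epi-projective quiver; hence X(G) with p_G is an epi-projective cover of G. -/
open CategoryTheory

lemma quiv_epi_of_surj {A B : Quiv'} (f : A ⟶ B)
    (hv : Function.Surjective f.vMap) (he : Function.Surjective f.eMap) : Epi f := by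
  constructor
  intro Z g h hgh
  have hV : g.vMap ∘ f.vMap = h.vMap ∘ f.vMap := congrArg QuivHom.vMap hgh
  have hE : g.eMap ∘ f.eMap = h.eMap ∘ f.eMap := congrArg QuivHom.eMap hgh
  apply QuivHom.ext <;> funext x
  · obtain ⟨a, rfl⟩ := hv x
    exact congrFun hV a
  · obtain ⟨a, rfl⟩ := he x
    exact congrFun hE a

lemma quiv_surjV_of_epi {A B : Quiv'} (f : A ⟶ B) (hf : Epi f) :
    Function.Surjective f.vMap := by
  let g : B ⟶ KQ Prop :=
    ⟨fun v => ∃ a, f.vMap a = v,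
     fun e => (∃ a, f.vMap a = B.s e, ∃ a, f.vMap a = B.t e),
     fun _ => rfl, fun _ => rfl⟩
  let h : B ⟶ KQ Prop :=
    ⟨fun _ => True, fun _ => (True, True), fun _ => rfl, fun _ => rfl⟩
  have key : f ≫ g = f ≫ h := by
    apply QuivHom.ext
    · funext x
      exact eq_true ⟨x, rfl⟩
    · funext x
      apply Prod.ext
      show (g.eMap (f.eMap x)).1 = True
      exact eq_true ⟨A.s x, f.comm_s x⟩
      show (g.eMap (f.eMap x)).2 = True
      exact eq_true ⟨A.t x, f.comm_t x⟩
  have := hf.left_cancellation g h key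
  intro v
  have : g.vMap v = True := congrFun (congrArg QuivHom.vMap this) v
  exact of_eq_true this

lemma quiv_surjE_of_epi {A B : Quiv'} (f : A ⟶ B) (hf : Epi f) :
    Function.Surjective f.eMap := by
  let g : B ⟶ BQ Prop :=
    ⟨fun _ => PUnit.unit, fun e => ∃ a, f.eMap a = e, fun _ => rfl, fun _ => rfl⟩
  let h : B ⟶ BQ Prop :=
    ⟨fun _ => PUnit.unit, fun _ => True, fun _ => rfl, fun _ => rfl⟩
  have key : f ≫ g = f ≫ h := by
    apply QuivHom.ext
    · rfl
    · funext x
      exact eq_true ⟨x, rfl⟩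
  have := hf.left_cancellation g h key
  intro e
  have : g.eMap e = True := congrFun (congrArg QuivHom.eMap this) e
  exact of_eq_true this

lemma coverMap_surjV (G : Quiv') : Function.Surjective (coverMap G).vMap := by
  intro v
  by_cases hv : Indep G v
  · exact ⟨Sum.inl ⟨v, hv⟩, rfl⟩
  · rw [Indep, not_and_or] at hv
    rcases hv with hs | ht
    · push_neg at hs
      obtain ⟨e, he⟩ := hs
      exact ⟨Sum.inr ((0 : Fin 2), e), by show (if (0 : Fin 2) = 0 then G.s e else G.t e) = v; rw [if_pos rfl]; exact he⟩
    · push_neg at ht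
      obtain ⟨e, he⟩ := ht
      refine ⟨Sum.inr ((1 : Fin 2), e), ?_⟩
      show (if (1 : Fin 2) = 0 then G.s e else G.t e) = v
      rw [if_neg (by decide)]
      exact he

lemma coverMap_surjE (G : Quiv') : Function.Surjective (coverMap G).eMap :=
  fun e => ⟨Sum.inr e, rfl⟩

theorem explosion_is_projective_cover (G : Quiv') :
    CategoryTheory.Epi (coverMap G) ∧ EpiCoessential (coverMap G) ∧
      EpiProjective (Explosion G) := by
  have hepi : Epi (coverMap G) :=
    quiv_epi_of_surj _ (coverMap_surjV G) (coverMap_surjE G)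
  refine ⟨hepi, ⟨hepi, ?_⟩, ?_⟩
  · -- epi-coessential
    intro A α hα
    have hVc : Function.Surjective (α ≫ coverMap G).vMap := quiv_surjV_of_epi _ hα
    have hEc : Function.Surjective (α ≫ coverMap G).eMap := quiv_surjE_of_epi _ hα
    -- edge surjectivity of α
    have hE : Function.Surjective α.eMap := by
      rintro (x | e)
      · exact x.elim
      · obtain ⟨a, ha⟩ := hEc e
        rcases h : α.eMap a with x | e'
        · exact x.elim
        · refine ⟨a, ?_⟩
          have : (coverMap G).eMap (α.eMap a) = e := ha
          rw [h] at this
          rw [h]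
          exact congrArg Sum.inr this
    have hV : Function.Surjective α.vMap := by
      rintro (⟨v, hv⟩ | ⟨i, e⟩)
      · obtain ⟨a, ha⟩ := hVc v
        rcases h : α.vMap a with ⟨w, hw⟩ | ⟨i, e⟩
        · refine ⟨a, ?_⟩
          have : (coverMap G).vMap (α.vMap a) = v := ha
          rw [h] at this
          rw [h]
          simp only [coverMap] at this
          subst this
          rfl
        · exfalso
          have : (coverMap G).vMap (α.vMap a) = v := ha
          rw [h] at this
          by_cases hi : i = 0
          · simp only [coverMap, Sum.elim_inr, hi, if_pos rfl] at this
            exact hv.1 e this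
          · simp only [coverMap, Sum.elim_inr, if_neg hi] at this
            exact hv.2 e (by have h2 : (if i = 0 then G.s e else G.t e) = v := this; rw [if_neg hi] at h2; exact h2)
      · obtain ⟨a, ha⟩ := hE (Sum.inr e)
        fin_cases i
        · refine ⟨A.s a, ?_⟩
          have := α.comm_s a
          rw [ha] at this
          exact this
        · refine ⟨A.t a, ?_⟩
          have := α.comm_t a
          rw [ha] at this
          exact this
    exact quiv_epi_of_surj α hV hE
  · -- epi-projective
    intro A B φ hφ ψ
    have hv : Function.Surjective φ.vMap := quiv_surjV_of_epi _ hφ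
    have he : Function.Surjective φ.eMap := quiv_surjE_of_epi _ hφ
    let ae : G.E → A.E := fun e => (he (ψ.eMap (Sum.inr e))).choose
    have hae : ∀ e, φ.eMap (ae e) = ψ.eMap (Sum.inr e) :=
      fun e => (he (ψ.eMap (Sum.inr e))).choose_spec
    let av : {v : G.V // Indep G v} → A.V := fun v => (hv (ψ.vMap (Sum.inl v))).choose
    have hav : ∀ v, φ.vMap (av v) = ψ.vMap (Sum.inl v) :=
      fun v => (hv (ψ.vMap (Sum.inl v))).choose_spec
    refine ⟨⟨Sum.elim av (fun p => if p.1 = 0 then A.s (ae p.2) else A.t (ae p.2)),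
      Sum.elim Empty.elim ae, ?_, ?_⟩, ?_⟩
    · rintro (x | e)
      · exact x.elim
      · show (if (0 : Fin 2) = 0 then A.s (ae e) else A.t (ae e)) = A.s (ae e)
        rw [if_pos rfl]
    · rintro (x | e)
      · exact x.elim
      · show (if (1 : Fin 2) = 0 then A.s (ae e) else A.t (ae e)) = A.t (ae e)
        rw [if_neg (by decide)]
    · apply QuivHom.ext <;> funext x
      · rcases x with v | ⟨i, e⟩
        · exact hav v
        · fin_cases i
          · show φ.vMap (if (0 : Fin 2) = 0 then A.s (ae e) else A.t (ae e)) =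
              ψ.vMap (Sum.inr ((0 : Fin 2), e))
            rw [if_pos rfl, φ.comm_s, hae e, ← ψ.comm_s (Sum.inr e)]
            rfl
          · show φ.vMap (if (1 : Fin 2) = 0 then A.s (ae e) else A.t (ae e)) =
              ψ.vMap (Sum.inr ((1 : Fin 2), e))
            rw [if_neg (by decide), φ.comm_t, hae e, ← ψ.comm_t (Sum.inr e)]
            rfl
      · rcases x with x | e
        · exact x.elim
        · exact hae e
end
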